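/- Let A be a finite set, let α be a countable dense linear order with at least two elements, and let w : α → A be a word. Then w contains a factor that is an η-shuffle: there exist a nonempty convex subset I of α whose induced order is countable, dense, and without endpoints (hence isomorphic to ℚ) and a nonempty subset B ⊆ A such that w(x) ∈ B for every x ∈ I and, for every a ∈ B, the set {x ∈ I : w(x) = a} is dense in I. -/

import Mathlib

/-- every word over a finite alphabet indexed by a countable
dense linear order (with at least two elements) contains a factor that is an
η-shuffle: there are a nonempty convex subset `I` whose induced order is
countable, dense and without endpoints, and a nonempty set `B` of letters
such that only letters of `B` occur in `I` and every letter of `B` occurs on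
a dense subset of `I`. -/
theorem dense_word_contains_shuffle_factor {A α : Type} [Finite A]
    [LinearOrder α] [Countable α] [DenselyOrdered α] [Nontrivial α]
    (w : α → A) :
    ∃ I : Set α, I.Nonempty ∧ I.OrdConnected ∧
      Countable ↥I ∧ DenselyOrdered ↥I ∧ NoMinOrder ↥I ∧ NoMaxOrder ↥I ∧
      ∃ B : Set A, B.Nonempty ∧ (∀ x ∈ I, w x ∈ B) ∧
        ∀ a ∈ B, ∀ x ∈ I, ∀ y ∈ I, x < y →
          ∃ z ∈ I, x < z ∧ z < y ∧ w z = a := by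
  classical
  -- the set of possible "numbers of letters occurring in an open interval"
  set S : Set ℕ := {n | ∃ u v : α, u < v ∧ (w '' Set.Ioo u v).ncard = n} with hSdef
  have hSne : S.Nonempty := by
    obtain ⟨a, b, hab⟩ := exists_pair_ne α
    rcases hab.lt_or_gt with h | h
    · exact ⟨_, a, b, h, rfl⟩
    · exact ⟨_, b, a, h, rfl⟩
  obtain ⟨n, hnS, hmin⟩ := Nat.lt_wfRel.wf.has_min S hSne
  obtain ⟨u, v, huv, hcard⟩ := hnS
  -- key: for any subinterval, the set of occurring letters is the same
  have key : ∀ x ∈ Set.Ioo u v, ∀ y ∈ Set.Ioo u v, x < y →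
      w '' Set.Ioo x y = w '' Set.Ioo u v := by
    intro x hx y hy hxy
    have hsub : Set.Ioo x y ⊆ Set.Ioo u v := fun z hz =>
      ⟨hx.1.trans hz.1, hz.2.trans hy.2⟩
    have himg : w '' Set.Ioo x y ⊆ w '' Set.Ioo u v := Set.image_mono hsub
    have hmem : (w '' Set.Ioo x y).ncard ∈ S := ⟨x, y, hxy, rfl⟩
    have hle : (w '' Set.Ioo u v).ncard ≤ (w '' Set.Ioo x y).ncard := by
      rw [hcard]
      exact Nat.le_of_not_lt (hmin _ hmem)
    exact Set.eq_of_subset_of_ncard_le himg hle (Set.toFinite _)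
  refine ⟨Set.Ioo u v, Set.nonempty_Ioo.2 huv, Set.ordConnected_Ioo, inferInstance,
    ?_, ?_, ?_, w '' Set.Ioo u v, ?_, fun x hx => Set.mem_image_of_mem w hx, ?_⟩
  · constructor
    intro a b hab
    obtain ⟨z, hz1, hz2⟩ := exists_between (show (a : α) < b from hab)
    exact ⟨⟨z, a.2.1.trans hz1, hz2.trans b.2.2⟩, hz1, hz2⟩
  · constructor
    intro a
    obtain ⟨z, hz1, hz2⟩ := exists_between a.2.1
    exact ⟨⟨z, hz1, hz2.trans a.2.2⟩, hz2⟩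
  · constructor
    intro a
    obtain ⟨z, hz1, hz2⟩ := exists_between a.2.2
    exact ⟨⟨z, a.2.1.trans hz1, hz2⟩, hz1⟩
  · exact (Set.nonempty_Ioo.2 huv).image w
  · intro a ha x hx y hy hxy
    rw [← key x hx y hy hxy] at ha
    obtain ⟨z, hz, hwz⟩ := ha
    exact ⟨z, ⟨hx.1.trans hz.1, hz.2.trans hy.2⟩, hz.1, hz.2, hwz⟩
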